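/- Let V be a vector space over ℂ and let G : V × V → ℂ be an alternating (antisymmetric) bilinear form. Let I_G ⊆ T(V) be the CCR ideal. Then the linear map ℂ × V → T(V)/I_G, (c, v) ↦ c·1 + [ι v], is injective; equivalently, I_G intersects the subspace ℂ·1 + ι(V) of T(V) only in 0. -/

import Mathlib

variable {V : Type*} [AddCommGroup V] [Module ℂ V]

/-- The CCR generators `ι v * ι w - ι w * ι v - G(v,w)·1`, `v, w ∈ V`. -/
def ccrSet (G : V →ₗ[ℂ] V →ₗ[ℂ] ℂ) : Set (TensorAlgebra ℂ V) :=
  {x | ∃ v w : V, x = TensorAlgebra.ι ℂ v * TensorAlgebra.ι ℂ w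
    - TensorAlgebra.ι ℂ w * TensorAlgebra.ι ℂ v
    - algebraMap ℂ (TensorAlgebra ℂ V) (G v w)}

/-- The defining relation of the CCR ideal `I_G = TwoSidedIdeal.span (ccrSet G)`;
`RingQuot` of this relation is the quotient `T(V)/I_G`. -/
def ccrRel (G : V →ₗ[ℂ] V →ₗ[ℂ] ℂ) :
    TensorAlgebra ℂ V → TensorAlgebra ℂ V → Prop :=
  fun a b => a - b ∈ ccrSet G

section Aux

open MvPolynomial

variable {ι : Type*} (G : V →ₗ[ℂ] V →ₗ[ℂ] ℂ) (b : Module.Basis ι ℂ V)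

/-- Linear embedding of `V` as degree one polynomials. -/
noncomputable def ccrToPoly : V →ₗ[ℂ] MvPolynomial ι ℂ :=
  (Finsupp.linearCombination ℂ X).comp (b.repr : V →ₗ[ℂ] (ι →₀ ℂ))

lemma ccrToPoly_injective : Function.Injective (ccrToPoly b) := by
  have h1 : Function.Injective (Finsupp.linearCombination ℂ (X : ι → MvPolynomial ι ℂ)) :=
    (MvPolynomial.linearIndependent_X ι ℂ)
  exact fun x y hxy => b.repr.injective (h1 hxy)

lemma ccrToPoly_constantCoeff (v : V) : constantCoeff (ccrToPoly b v) = 0 := by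
  simp [ccrToPoly, Finsupp.linearCombination_apply, Finsupp.sum, map_sum]

/-- The derivation part of the CCR representation. -/
noncomputable def ccrDeriv (v : V) :
    Derivation ℂ (MvPolynomial ι ℂ) (MvPolynomial ι ℂ) :=
  mkDerivation ℂ (fun i => C (G v (b i) / 2))

lemma ccrDeriv_toPoly (v w : V) :
    ccrDeriv G b v (ccrToPoly b w) = C (G v w / 2) := by
  have hw : G v w = ∑ i ∈ (b.repr w).support, b.repr w i * G v (b i) := by
    conv_lhs => rw [← b.linearCombination_repr w]
    rw [Finsupp.linearCombination_apply, Finsupp.sum, map_sum]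
    simp [smul_eq_mul]
  simp only [ccrDeriv, ccrToPoly, LinearMap.coe_comp, Function.comp_apply,
    LinearEquiv.coe_coe, Finsupp.linearCombination_apply, Finsupp.sum, map_sum,
    Derivation.map_smul, mkDerivation_X]
  rw [hw, Finset.sum_div, map_sum]
  refine Finset.sum_congr rfl fun i _ => ?_
  rw [smul_eq_C_mul, ← C_mul, mul_div_assoc]

lemma ccrDeriv_comm (v w : V) (q : MvPolynomial ι ℂ) :
    ccrDeriv G b v (ccrDeriv G b w q) = ccrDeriv G b w (ccrDeriv G b v q) := by
  have hC : ∀ (x : V) (r : ℂ), ccrDeriv G b x (C r) = 0 := by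
    intro x r
    rw [show (C r : MvPolynomial ι ℂ) = r • 1 by rw [smul_eq_C_mul, mul_one]]
    simp
  have h0 : ⁅ccrDeriv G b v, ccrDeriv G b w⁆ = 0 := by
    apply derivation_ext
    intro i
    rw [Derivation.commutator_apply]
    simp only [ccrDeriv, mkDerivation_X]
    rw [show mkDerivation ℂ (fun i => C (G v (b i) / 2)) = ccrDeriv G b v from rfl,
      show mkDerivation ℂ (fun i => C (G w (b i) / 2)) = ccrDeriv G b w from rfl,
      hC, hC]
    simp
  have := congrArg (fun D => D q) h0
  simpa [Derivation.commutator_apply, sub_eq_zero] using this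

/-- The CCR representation on polynomials: `ρ(v) = m_{v} + D_v`. -/
noncomputable def ccrRho : V →ₗ[ℂ] Module.End ℂ (MvPolynomial ι ℂ) where
  toFun v := LinearMap.mulLeft ℂ (ccrToPoly b v) + (ccrDeriv G b v).toLinearMap
  map_add' v w := by
    have hD : ccrDeriv G b (v + w) = ccrDeriv G b v + ccrDeriv G b w := by
      apply derivation_ext
      intro i
      simp [ccrDeriv, mkDerivation_X, map_add, add_div]
    apply LinearMap.ext; intro q
    simp [hD, map_add, add_mul]
    ring
  map_smul' c v := by
    have hD : ccrDeriv G b (c • v) = c • ccrDeriv G b v := by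
      apply derivation_ext
      intro i
      simp [ccrDeriv, mkDerivation_X, mul_div_assoc, smul_eq_C_mul]
    apply LinearMap.ext; intro q
    show ccrToPoly b (c • v) * q + ccrDeriv G b (c • v) q
      = c • (ccrToPoly b v * q + ccrDeriv G b v q)
    rw [map_smul, hD]
    simp only [Derivation.smul_apply, smul_add, smul_mul_assoc]

lemma ccrRho_apply (v : V) (q : MvPolynomial ι ℂ) :
    ccrRho G b v q = ccrToPoly b v * q + ccrDeriv G b v q := rfl

lemma ccrRho_comm (hG : ∀ v : V, G v v = 0) (v w : V) :
    ccrRho G b v * ccrRho G b w - ccrRho G b w * ccrRho G b v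
      = algebraMap ℂ (Module.End ℂ (MvPolynomial ι ℂ)) (G v w) := by
  have hanti : G w v = -G v w := by
    have h := hG (v + w)
    simp only [map_add, LinearMap.add_apply, hG] at h
    linear_combination h
  apply LinearMap.ext; intro q
  simp only [LinearMap.sub_apply, Module.End.mul_apply, ccrRho_apply, mul_add, map_add,
    Derivation.leibniz, Module.algebraMap_end_apply, smul_eq_mul]
  rw [ccrDeriv_toPoly, ccrDeriv_toPoly, ccrDeriv_comm, hanti]
  rw [MvPolynomial.smul_eq_C_mul]
  rw [show MvPolynomial.C (-(G v w)/2) = -MvPolynomial.C ((G v w)/2) by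
      rw [neg_div, map_neg],
    show (MvPolynomial.C (G v w) : MvPolynomial ι ℂ)
        = MvPolynomial.C ((G v w)/2) + MvPolynomial.C ((G v w)/2) by
      rw [← map_add]; ring_nf]
  ring

end Aux

open MvPolynomial in
/-- **Injectivity of the degree-≤1 part in the CCR quotient.**
For an alternating (antisymmetric) bilinear form `G` on a complex vector space `V`, the
linear map `ℂ × V → T(V)/I_G`, `(c, v) ↦ c·1 + [ι v]`, is injective; equivalently, the
CCR ideal `I_G` intersects the subspace `ℂ·1 + ι(V)` of `T(V)` only in `0`. -/
theorem ccr_quotient_degree_one_injective (G : V →ₗ[ℂ] V →ₗ[ℂ] ℂ)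
    (hG : ∀ v : V, G v v = 0) :
    Function.Injective (fun p : ℂ × V =>
      algebraMap ℂ (RingQuot (ccrRel G)) p.1
        + RingQuot.mkAlgHom ℂ (ccrRel G) (TensorAlgebra.ι ℂ p.2)) := by
  classical
  let b := Module.Basis.ofVectorSpace ℂ V
  let φ := TensorAlgebra.lift ℂ (ccrRho G b)
  have hrel : ∀ ⦃x y⦄, ccrRel G x y → φ x = φ y := by
    rintro x y ⟨v, w, hvw⟩
    have hxy : x = y + (TensorAlgebra.ι ℂ v * TensorAlgebra.ι ℂ w
        - TensorAlgebra.ι ℂ w * TensorAlgebra.ι ℂ v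
        - algebraMap ℂ (TensorAlgebra ℂ V) (G v w)) := by
      rw [← hvw]; abel
    rw [hxy, map_add]
    have : φ (TensorAlgebra.ι ℂ v * TensorAlgebra.ι ℂ w
        - TensorAlgebra.ι ℂ w * TensorAlgebra.ι ℂ v
        - algebraMap ℂ (TensorAlgebra ℂ V) (G v w)) = 0 := by
      rw [map_sub, map_sub, map_mul, map_mul, AlgHom.commutes]
      simp only [φ, TensorAlgebra.lift_ι_apply]
      rw [← ccrRho_comm G b hG v w]
      abel
    rw [this, add_zero]
  let Φ := RingQuot.liftAlgHom ℂ (s := ccrRel G) ⟨φ, hrel⟩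
  intro p q h
  have h2 := congrArg (fun z => Φ z (1 : MvPolynomial (Module.Basis.ofVectorSpaceIndex ℂ V) ℂ)) h
  have key : ∀ r : ℂ × V,
      Φ (algebraMap ℂ (RingQuot (ccrRel G)) r.1
        + RingQuot.mkAlgHom ℂ (ccrRel G) (TensorAlgebra.ι ℂ r.2))
        (1 : MvPolynomial (Module.Basis.ofVectorSpaceIndex ℂ V) ℂ)
        = C r.1 + ccrToPoly b r.2 := by
    intro r
    rw [map_add, AlgHom.commutes, RingQuot.liftAlgHom_mkAlgHom_apply]
    simp only [φ, TensorAlgebra.lift_ι_apply]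
    rw [LinearMap.add_apply, Module.algebraMap_end_apply, ccrRho_apply, mul_one,
      Derivation.map_one_eq_zero, add_zero, smul_eq_C_mul, mul_one]
  simp only [key] at h2
  have hc : p.1 = q.1 := by
    have := congrArg constantCoeff h2
    simpa [ccrToPoly_constantCoeff] using this
  have hv : p.2 = q.2 := by
    apply ccrToPoly_injective b
    have := h2
    rw [hc] at this
    exact add_left_cancel this
  exact Prod.ext hc hv
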